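/- arXiv:2405.07970 — 3 statements merged into one kernel-verified Lean document; each statement's English description precedes it below -/
import Mathlib

section
/- Let S be an element of the group generated by a finite set {S_a} of Pauli operators, each supported on a set of qubits of diameter at most w. For any region R of qubits, there exists S' in the same group such that the support of S' is contained in R⁺ (the w-neighborhood of R) and S·S' acts trivially on R (i.e., S restricted to R equals S' restricted to R). -/
/-- Truncation of stabilizer operators (Paulis modulo phase, in symplectic representation):
for any S in the group generated by generators of diameter ≤ w and any region R, there is an
S' in the group supported in the w-neighborhood R⁺ of R that agrees with S on R. -/
theorem stabilizer_truncation {Q : Type*} [Fintype Q] [MetricSpace Q]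
    {A : Type*} (gen : A → Q → ZMod 2 × ZMod 2) (w : ℝ)
    (hdiam : ∀ a : A, ∀ q ∈ {q | gen a q ≠ 0}, ∀ q' ∈ {q | gen a q ≠ 0}, dist q q' ≤ w)
    (S : Q → ZMod 2 × ZMod 2)
    (hS : S ∈ AddSubgroup.closure (Set.range gen))
    (R : Set Q) :
    ∃ S' ∈ AddSubgroup.closure (Set.range gen),
      {q | S' q ≠ 0} ⊆ {q | ∃ r ∈ R, dist q r ≤ w} ∧ ∀ q ∈ R, S q = S' q := by
  induction hS using AddSubgroup.closure_induction with
  | mem x hx =>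
    obtain ⟨a, rfl⟩ := hx
    by_cases h : ∃ r ∈ R, gen a r ≠ 0
    · obtain ⟨r, hrR, hr⟩ := h
      refine ⟨gen a, AddSubgroup.subset_closure ⟨a, rfl⟩, ?_, fun q _ => rfl⟩
      intro q hq
      exact ⟨r, hrR, hdiam a q hq r hr⟩
    · push_neg at h
      refine ⟨0, zero_mem _, ?_, ?_⟩
      · intro q hq; exact absurd rfl hq
      · intro q hq; simpa using h q hq
  | zero => exact ⟨0, zero_mem _, fun q hq => absurd rfl hq, fun q _ => rfl⟩
  | add x y hx hy ihx ihy =>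
    obtain ⟨x', hx', hxs, hxa⟩ := ihx
    obtain ⟨y', hy', hys, hya⟩ := ihy
    refine ⟨x' + y', add_mem hx' hy', ?_, ?_⟩
    · intro q hq
      by_cases h : x' q ≠ 0
      · exact hxs h
      · push_neg at h
        refine hys ?_
        intro h'
        apply hq
        simp [Pi.add_apply, h, h']
    · intro q hq
      simp [Pi.add_apply, hxa q hq, hya q hq]
  | neg x hx ihx =>
    obtain ⟨x', hx', hxs, hxa⟩ := ihx
    refine ⟨-x', neg_mem hx', ?_, ?_⟩
    · intro q hq
      refine hxs ?_
      intro h; apply hq; simp [Pi.neg_apply, h]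
    · intro q hq; simp [Pi.neg_apply, ← hxa q hq]
end

section
/- Let |ψ_{BD}⟩ ∈ H_B ⊗ H_D, |ψ_{AC}⟩ ∈ H_A ⊗ H_C, |ψ_{AD}⟩ ∈ H_A ⊗ H_D, |ψ_{BC}⟩ ∈ H_B ⊗ H_C be unit vectors such that, as vectors in H_A ⊗ H_B ⊗ H_C ⊗ H_D, |ψ_{AC}⟩ ⊗ |ψ_{BD}⟩ = |ψ_{AD}⟩ ⊗ |ψ_{BC}⟩. Then there exist unit vectors |ψ_A⟩, |ψ_B⟩, |ψ_C⟩, |ψ_D⟩ such that |ψ_{AC}⟩ = |ψ_A⟩ ⊗ |ψ_C⟩ and |ψ_{BD}⟩ = |ψ_B⟩ ⊗ |ψ_D⟩ up to phases. -/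
open Matrix

lemma norm_factor {n m : ℕ} (ψ : Fin n × Fin m → ℂ) (f : Fin n → ℂ) (g : Fin m → ℂ)
    (hfg : ∀ i j, ψ (i, j) = f i * g j) (hψ : star ψ ⬝ᵥ ψ = 1) :
    ∃ (u : Fin n → ℂ) (v : Fin m → ℂ), star u ⬝ᵥ u = 1 ∧ star v ⬝ᵥ v = 1 ∧
      ∀ i j, ψ (i, j) = u i * v j := by
  set SA : ℝ := ∑ i, Complex.normSq (f i) with hSA
  set SC : ℝ := ∑ j, Complex.normSq (g j) with hSC
  have hdot : star ψ ⬝ᵥ ψ = ((SA * SC : ℝ) : ℂ) := by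
    simp only [dotProduct, Pi.star_apply, Complex.star_def, Complex.conj_mul',
      Fintype.sum_prod_type]
    rw [hSA, hSC]
    push_cast
    rw [Finset.sum_mul_sum]
    refine Finset.sum_congr rfl fun i _ => Finset.sum_congr rfl fun j _ => ?_
    rw [hfg i j]
    simp [Complex.normSq_eq_norm_sq, _root_.map_mul, mul_pow]
  have hprod : SA * SC = 1 := by
    have := hdot.symm.trans hψ
    exact_mod_cast this
  have hSAnn : 0 ≤ SA := Finset.sum_nonneg fun i _ => Complex.normSq_nonneg _
  have hSApos : 0 < SA := by
    rcases hSAnn.lt_or_eq with h | h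
    · exact h
    · exfalso; rw [← h] at hprod; simp at hprod
  set t : ℝ := Real.sqrt SA with ht
  have htpos : 0 < t := Real.sqrt_pos.mpr hSApos
  have ht2 : t ^ 2 = SA := Real.sq_sqrt hSApos.le
  refine ⟨fun i => f i / t, fun j => g j * t, ?_, ?_, fun i j => ?_⟩
  · simp only [dotProduct, Pi.star_apply, Complex.star_def, Complex.conj_mul']
    have : ∀ i, (‖f i / (t:ℂ)‖:ℂ) ^ 2 = ((Complex.normSq (f i) / t^2 : ℝ) : ℂ) := by
      intro i
      push_cast
      rw [norm_div]
      simp [Complex.normSq_eq_norm_sq, div_pow, abs_of_pos htpos]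
    simp only [this]
    rw [← Complex.ofReal_sum]
    rw [← Finset.sum_div, ht2, ← hSA, div_self hSApos.ne']
    simp
  · simp only [dotProduct, Pi.star_apply, Complex.star_def, Complex.conj_mul']
    have : ∀ j, (‖g j * (t:ℂ)‖:ℂ) ^ 2 = ((Complex.normSq (g j) * t^2 : ℝ) : ℂ) := by
      intro j
      push_cast
      rw [norm_mul]
      simp [Complex.normSq_eq_norm_sq, mul_pow, abs_of_pos htpos]
    simp only [this]
    rw [← Complex.ofReal_sum, ← Finset.sum_mul, ht2, ← hSC]
    rw [mul_comm] at hprod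
    simp [hprod]
  · have htc : (t:ℂ) ≠ 0 := by exact_mod_cast htpos.ne'
    rw [hfg i j]
    field_simp


/-- If |ψ_AC⟩ ⊗ |ψ_BD⟩ = |ψ_AD⟩ ⊗ |ψ_BC⟩ as vectors on A⊗B⊗C⊗D, then ψ_AC and ψ_BD
factorize into single-party unit vectors, up to phases (equality of rank-one projectors). -/
theorem cross_factorization {a b c d : ℕ}
    (ψAC : Fin a × Fin c → ℂ) (ψBD : Fin b × Fin d → ℂ)
    (ψAD : Fin a × Fin d → ℂ) (ψBC : Fin b × Fin c → ℂ)
    (hAC : star ψAC ⬝ᵥ ψAC = 1) (hBD : star ψBD ⬝ᵥ ψBD = 1)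
    (hAD : star ψAD ⬝ᵥ ψAD = 1) (hBC : star ψBC ⬝ᵥ ψBC = 1)
    (heq : ∀ (x₁ : Fin a) (x₂ : Fin b) (x₃ : Fin c) (x₄ : Fin d),
      ψAC (x₁, x₃) * ψBD (x₂, x₄) = ψAD (x₁, x₄) * ψBC (x₂, x₃)) :
    ∃ (ψA : Fin a → ℂ) (ψB : Fin b → ℂ) (ψC : Fin c → ℂ) (ψD : Fin d → ℂ),
      star ψA ⬝ᵥ ψA = 1 ∧ star ψB ⬝ᵥ ψB = 1 ∧ star ψC ⬝ᵥ ψC = 1 ∧ star ψD ⬝ᵥ ψD = 1 ∧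
      (∀ x₁ x₃ y₁ y₃, ψAC (x₁, x₃) * star (ψAC (y₁, y₃)) =
        (ψA x₁ * ψC x₃) * star (ψA y₁ * ψC y₃)) ∧
      (∀ x₂ x₄ y₂ y₄, ψBD (x₂, x₄) * star (ψBD (y₂, y₄)) =
        (ψB x₂ * ψD x₄) * star (ψB y₂ * ψD y₄)) := by
  obtain ⟨⟨b₀, d₀⟩, hbd⟩ : ∃ p, ψBD p ≠ 0 := by
    by_contra h; push_neg at h; simp [dotProduct, h] at hBD
  obtain ⟨⟨a₀, c₀⟩, hac⟩ : ∃ p, ψAC p ≠ 0 := by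
    by_contra h; push_neg at h; simp [dotProduct, h] at hAC
  have hACf : ∀ i j, ψAC (i, j) = (ψAD (i, d₀) / ψBD (b₀, d₀)) * ψBC (b₀, j) := by
    intro i j
    have := heq i b₀ j d₀
    field_simp
    linear_combination this
  have hBDf : ∀ i j, ψBD (i, j) = (ψBC (i, c₀) / ψAC (a₀, c₀)) * ψAD (a₀, j) := by
    intro i j
    have := heq a₀ i c₀ j
    field_simp
    linear_combination this
  obtain ⟨ψA, ψC, hA1, hC1, hACuv⟩ := norm_factor ψAC _ _ hACf hAC
  obtain ⟨ψB, ψD, hB1, hD1, hBDuv⟩ := norm_factor ψBD _ _ hBDf hBD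
  exact ⟨ψA, ψB, ψC, ψD, hA1, hB1, hC1, hD1,
    fun x₁ x₃ y₁ y₃ => by rw [hACuv, hACuv],
    fun x₂ x₄ y₂ y₄ => by rw [hBDuv, hBDuv]⟩
end

section
/- The n-qubit GHZ state |GHZ⟩ = (|0⟩^⊗n + |1⟩^⊗n)/√2 satisfies max over product states |P⟩ = ⊗ⱼ|pⱼ⟩ of |⟨GHZ|P⟩|² = 1/2; hence its geometric entanglement measure is E₀(GHZ) = 1. -/
open Matrix

/-- The n-qubit GHZ state as a function on computational basis configurations. -/
noncomputable def GHZ (n : ℕ) : (Fin n → Fin 2) → ℂ :=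
  fun v => if v = (fun _ => 0) then (1 / Real.sqrt 2 : ℝ) else
    if v = (fun _ => 1) then (1 / Real.sqrt 2 : ℝ) else 0

lemma GHZ_sum_eval (n : ℕ) (hn : 0 < n) (p : Fin n → Fin 2 → ℂ) :
    (∑ v : Fin n → Fin 2, (starRingEnd ℂ) (GHZ n v) * ∏ j, p j (v j))
      = ((1 / Real.sqrt 2 : ℝ) : ℂ) * (∏ j, p j 0 + ∏ j, p j 1) := by
  have hne : (fun _ : Fin n => (0 : Fin 2)) ≠ (fun _ => 1) := by
    intro h
    exact absurd (congrFun h ⟨0, hn⟩) (by decide)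
  rw [Finset.sum_eq_add (fun _ : Fin n => (0 : Fin 2)) (fun _ => 1) hne
    (fun c _ hc => by simp [GHZ, hc.1, hc.2]) (by simp) (by simp)]
  simp only [GHZ, if_pos rfl, if_neg hne.symm, if_neg hne, if_pos rfl]
  rw [mul_add]
  simp [Complex.conj_ofReal]

lemma prod_add_prod_le (n : ℕ) (hn : 2 ≤ n) (a b : Fin n → ℝ)
    (ha : ∀ j, 0 ≤ a j) (hb : ∀ j, 0 ≤ b j)
    (h1 : ∀ j, a j ^ 2 + b j ^ 2 = 1) :
    (∏ j, a j) + ∏ j, b j ≤ 1 := by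
  set i0 : Fin n := ⟨0, by omega⟩
  set i1 : Fin n := ⟨1, by omega⟩
  have hne : i0 ≠ i1 := by simp [i0, i1, Fin.ext_iff]
  have hle1 : ∀ j, a j ≤ 1 := fun j => by nlinarith [ha j, hb j, h1 j, sq_nonneg (b j)]
  have hle1' : ∀ j, b j ≤ 1 := fun j => by nlinarith [ha j, hb j, h1 j, sq_nonneg (a j)]
  have key : ∀ (c : Fin n → ℝ), (∀ j, 0 ≤ c j) → (∀ j, c j ≤ 1) →
      (∏ j, c j) ≤ c i0 * c i1 := by
    intro c hc hc1
    have hsub : ({i0, i1} : Finset (Fin n)) ⊆ Finset.univ := Finset.subset_univ _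
    rw [← Finset.prod_sdiff hsub, Finset.prod_pair hne]
    have h2 : (∏ j ∈ Finset.univ \ {i0, i1}, c j) ≤ 1 :=
      Finset.prod_le_one (fun j _ => hc j) (fun j _ => hc1 j)
    have h3 : 0 ≤ c i0 * c i1 := mul_nonneg (hc i0) (hc i1)
    nlinarith [Finset.prod_nonneg (fun j (_ : j ∈ Finset.univ \ {i0, i1}) => hc j)]
  have k1 := key a ha hle1
  have k2 := key b hb hle1'
  nlinarith [sq_nonneg (a i0 - a i1), sq_nonneg (b i0 - b i1), h1 i0, h1 i1]

/-- For n ≥ 2, the maximal squared overlap of the GHZ state with product states is 1/2;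
hence its geometric entanglement measure is E₀(GHZ) = −log₂(1/2) = 1. -/
theorem GHZ_max_product_overlap (n : ℕ) (hn : 2 ≤ n) :
    IsGreatest
      {x : ℝ | ∃ p : Fin n → Fin 2 → ℂ, (∀ j, star (p j) ⬝ᵥ p j = 1) ∧
        x = Complex.normSq (∑ v : Fin n → Fin 2,
          (starRingEnd ℂ) (GHZ n v) * ∏ j, p j (v j))}
      (1 / 2) ∧
    -Real.logb 2 (1 / 2) = 1 := by
  have hn0 : 0 < n := by omega
  have hsqrt : (0:ℝ) < Real.sqrt 2 := Real.sqrt_pos.mpr (by norm_num)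
  have hsq : (1 / Real.sqrt 2 : ℝ) ^ 2 = 1 / 2 := by
    rw [div_pow, one_pow, Real.sq_sqrt (by norm_num : (0:ℝ) ≤ 2)]
  refine ⟨⟨?_, ?_⟩, ?_⟩
  · -- membership: take p j = |0⟩
    refine ⟨fun _ i => if i = 0 then 1 else 0, fun j => ?_, ?_⟩
    · simp [dotProduct, Fin.sum_univ_two]
    · have hval := GHZ_sum_eval n hn0 (fun _ i => if i = 0 then (1:ℂ) else 0)
      simp only at hval
      rw [hval]
      simp only [if_true, Finset.prod_const, one_pow, Finset.card_univ, Fintype.card_fin,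
        if_neg (by decide : ¬(1 : Fin 2) = 0), zero_pow hn0.ne', add_zero, mul_one,
        Complex.normSq_ofReal]
      rw [← sq, hsq]
  · -- upper bound
    rintro x ⟨p, hp, rfl⟩
    rw [GHZ_sum_eval n hn0, Complex.normSq_mul, Complex.normSq_ofReal, ← sq, hsq]
    have hnorm : ∀ j, Complex.normSq (p j 0) + Complex.normSq (p j 1) = 1 := by
      intro j
      have := hp j
      simp only [dotProduct, Fin.sum_univ_two, Pi.star_apply] at this
      have h2 : ((Complex.normSq (p j 0) : ℂ)) + (Complex.normSq (p j 1) : ℂ) = 1 := by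
        rw [← Complex.mul_conj, ← Complex.mul_conj]
        simpa [mul_comm] using this
      exact_mod_cast h2
    have key : Complex.normSq (∏ j, p j 0 + ∏ j, p j 1) ≤ 1 := by
      have habs : ‖∏ j, p j 0 + ∏ j, p j 1‖ ≤ 1 := by
        calc ‖∏ j, p j 0 + ∏ j, p j 1‖
            ≤ ‖∏ j, p j 0‖ + ‖∏ j, p j 1‖ :=
              norm_add_le _ _
          _ = (∏ j, ‖p j 0‖) + ∏ j, ‖p j 1‖ := by
              rw [norm_prod, norm_prod]
          _ ≤ 1 := by
              apply prod_add_prod_le n hn _ _ (fun j => norm_nonneg _)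
                (fun j => norm_nonneg _)
              intro j
              have h := hnorm j
              rw [← Complex.sq_norm, ← Complex.sq_norm] at h
              exact h
      calc Complex.normSq (∏ j, p j 0 + ∏ j, p j 1)
          = ‖∏ j, p j 0 + ∏ j, p j 1‖ ^ 2 := (Complex.sq_norm _).symm
        _ ≤ 1 := by nlinarith [norm_nonneg (∏ j, p j 0 + ∏ j, p j 1)]
    nlinarith
  · rw [one_div, Real.logb_inv, Real.logb_self_eq_one] <;> norm_num
end
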